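/- arXiv:0907.4771 — 3 statements merged into one kernel-verified Lean document; each statement's English description precedes it below -/
import Mathlib

section
/- For any positive real numbers ℓ and M there exists C > 0 such that for every c ∈ ℝ, every locally integrable real function q with ∫_c^{c+ℓ} |q(t)| dt ≤ M, and every real-valued solution u of -u'' + q u = 0 on [c, c+ℓ], one has ∫_c^{c+ℓ} |u(t)|² dt ≥ C (|u(c)|² + |u'(c)|²). -/
open MeasureTheory intervalIntegral

set_option maxHeartbeats 1000000 in
/-- A priori lower bound on the local `L²` norm of solutions of `-u'' + q u = 0`,
uniform over `c`, over potentials `q` with `∫_c^{c+ℓ}|q| ≤ M`, and over solutions `u`. -/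
theorem stmt2 (ℓ M : ℝ) (hℓ : 0 < ℓ) (hM : 0 < M) :
    ∃ C > 0, ∀ (c : ℝ) (q u u' : ℝ → ℝ),
      IntegrableOn q (Set.Icc c (c + ℓ)) →
      (∫ t in c..(c + ℓ), |q t|) ≤ M →
      (∀ x ∈ Set.Icc c (c + ℓ), HasDerivAt u (u' x) x) →
      (∀ x ∈ Set.Icc c (c + ℓ), u' x = u' c + ∫ t in c..x, q t * u t) →
      C * ((u c) ^ 2 + (u' c) ^ 2) ≤ ∫ t in c..(c + ℓ), (u t) ^ 2 := by
  set β : ℝ := (2 + ℓ * M) / ℓ with hβdef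
  have hβ : 0 < β := by positivity
  set γ : ℝ := β + M with hγdef
  have hγ : 0 < γ := by positivity
  set r : ℝ := min (ℓ / 2) (1 / (2 * γ)) with hrdef
  have hr : 0 < r := lt_min (by positivity) (by positivity)
  have hrℓ : r ≤ ℓ / 2 := min_le_left _ _
  have hrγ : γ * r ≤ 1 / 2 := by
    have := min_le_right (ℓ / 2) (1 / (2 * γ))
    calc γ * r ≤ γ * (1 / (2 * γ)) := by
          exact mul_le_mul_of_nonneg_left this hγ.le
      _ = 1 / 2 := by field_simp
  refine ⟨r / (4 * (1 + β ^ 2)), by positivity, ?_⟩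
  intro c q u u' hq hqM hu hu'
  have hcl : c ≤ c + ℓ := by linarith
  have huIcc : Set.uIcc c (c + ℓ) = Set.Icc c (c + ℓ) := Set.uIcc_of_le hcl
  set I : Set ℝ := Set.Icc c (c + ℓ) with hIdef
  have hu_cont : ContinuousOn u I := fun x hx => (hu x hx).continuousAt.continuousWithinAt
  -- maximum of |u|
  obtain ⟨x₀, hx₀, hmax⟩ :=
    isCompact_Icc.exists_isMaxOn (α := ℝ) ⟨c, Set.left_mem_Icc.2 hcl⟩ hu_cont.abs
  set S : ℝ := |u x₀| with hSdef
  have hS0 : 0 ≤ S := abs_nonneg _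
  have hS : ∀ x ∈ I, |u x| ≤ S := fun x hx => hmax hx
  -- interval integrability of q and q*u
  have hqI : IntervalIntegrable q volume c (c + ℓ) := by
    rw [intervalIntegrable_iff_integrableOn_Icc_of_le hcl]; exact hq
  have hqu_int : IntegrableOn (fun t => q t * u t) I := hq.mul_continuousOn hu_cont isCompact_Icc
  have hquI : IntervalIntegrable (fun t => q t * u t) volume c (c + ℓ) := by
    rw [intervalIntegrable_iff_integrableOn_Icc_of_le hcl]; exact hqu_int
  have hqabs_nonneg : (0:ℝ) ≤ ∫ t in c..(c + ℓ), |q t| :=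
    intervalIntegral.integral_nonneg hcl fun t _ => abs_nonneg _
  -- bound on the primitive of q*u
  have hinner : ∀ x ∈ I, |∫ t in c..x, q t * u t| ≤ M * S := by
    intro x hx
    have hqux : IntervalIntegrable (fun t => q t * u t) volume c x :=
      hquI.mono_set (by rw [huIcc, Set.uIcc_of_le hx.1]; exact Set.Icc_subset_Icc le_rfl hx.2)
    have hqx : IntervalIntegrable q volume c x :=
      hqI.mono_set (by rw [huIcc, Set.uIcc_of_le hx.1]; exact Set.Icc_subset_Icc le_rfl hx.2)
    calc |∫ t in c..x, q t * u t| ≤ ∫ t in c..x, |q t * u t| :=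
          intervalIntegral.abs_integral_le_integral_abs hx.1
      _ ≤ ∫ t in c..x, |q t| * S := by
          refine intervalIntegral.integral_mono_on hx.1 hqux.abs (hqx.abs.mul_const S) ?_
          intro t ht
          rw [abs_mul]
          exact mul_le_mul_of_nonneg_left
            (hS t ⟨ht.1, le_trans ht.2 hx.2⟩) (abs_nonneg _)
      _ ≤ ∫ t in c..(c + ℓ), |q t| * S := by
          refine intervalIntegral.integral_mono_interval le_rfl hx.1 hx.2 ?_
            (hqI.abs.mul_const S)
          filter_upwards with t
          exact mul_nonneg (abs_nonneg _) hS0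
      _ = (∫ t in c..(c + ℓ), |q t|) * S := intervalIntegral.integral_mul_const _ _
      _ ≤ M * S := mul_le_mul_of_nonneg_right hqM hS0
  -- continuity of u'
  have hprim_cont : ContinuousOn (fun x => ∫ t in c..x, q t * u t) I := by
    have := intervalIntegral.continuousOn_primitive_interval
      (f := fun t => q t * u t) (a := c) (b := c + ℓ) (μ := volume) (by rw [huIcc]; exact hqu_int)
    rwa [huIcc] at this
  have hu'_cont : ContinuousOn u' I := by
    refine ContinuousOn.congr (f := fun x => u' c + ∫ t in c..x, q t * u t)
      (continuousOn_const.add hprim_cont) ?_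
    intro x hx; exact hu' x hx
  have hu'I : IntervalIntegrable u' volume c (c + ℓ) := by
    apply ContinuousOn.intervalIntegrable; rwa [huIcc]
  -- FTC
  have hFTC : ∫ t in c..(c + ℓ), u' t = u (c + ℓ) - u c :=
    intervalIntegral.integral_eq_sub_of_hasDerivAt
      (fun x hx => hu x (huIcc ▸ hx)) hu'I
  have hprimI : IntervalIntegrable (fun x => ∫ t in c..x, q t * u t) volume c (c + ℓ) := by
    apply ContinuousOn.intervalIntegrable; rwa [huIcc]
  have hsplit : ∫ t in c..(c + ℓ), u' t
      = ℓ * u' c + ∫ x in c..(c + ℓ), (∫ t in c..x, q t * u t) := by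
    rw [intervalIntegral.integral_congr (g := fun x => u' c + ∫ t in c..x, q t * u t)
      (fun x hx => hu' x (huIcc ▸ hx))]
    rw [intervalIntegral.integral_add intervalIntegrable_const hprimI,
      intervalIntegral.integral_const]
    simp only [smul_eq_mul]
    ring_nf
  have hIbound : |∫ x in c..(c + ℓ), (∫ t in c..x, q t * u t)| ≤ ℓ * (M * S) := by
    have := intervalIntegral.norm_integral_le_of_norm_le_const
      (a := c) (b := c + ℓ) (C := M * S) (f := fun x => ∫ t in c..x, q t * u t) ?_
    · rw [Real.norm_eq_abs, show |c + ℓ - c| = ℓ by rw [add_sub_cancel_left]; exact abs_of_pos hℓ]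
        at this
      exact le_of_le_of_eq this (by ring)
    · intro x hx
      rw [Set.uIoc_of_le hcl] at hx
      exact (Real.norm_eq_abs _) ▸ hinner x ⟨hx.1.le, hx.2⟩
  -- bound on |u' c|
  have hu'c : |u' c| ≤ β * S := by
    have h1 : |ℓ * u' c| ≤ 2 * S + ℓ * (M * S) := by
      have h2 : ℓ * u' c = (u (c + ℓ) - u c) - ∫ x in c..(c + ℓ), (∫ t in c..x, q t * u t) := by
        rw [← hFTC, hsplit]; ring
      rw [h2]
      have h3 : |u (c + ℓ) - u c| ≤ 2 * S := by
        have := hS (c + ℓ) (Set.right_mem_Icc.2 hcl)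
        have := hS c (Set.left_mem_Icc.2 hcl)
        calc |u (c + ℓ) - u c| ≤ |u (c + ℓ)| + |u c| := abs_sub _ _
          _ ≤ 2 * S := by linarith
      calc |(u (c + ℓ) - u c) - ∫ x in c..(c + ℓ), (∫ t in c..x, q t * u t)|
          ≤ |u (c + ℓ) - u c| + |∫ x in c..(c + ℓ), (∫ t in c..x, q t * u t)| := abs_sub _ _
        _ ≤ 2 * S + ℓ * (M * S) := add_le_add h3 hIbound
    rw [abs_mul, abs_of_pos hℓ] at h1
    rw [hβdef, div_mul_eq_mul_div, le_div_iff₀ hℓ]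
    nlinarith
  -- bound on |u'| everywhere
  have hu'B : ∀ x ∈ I, |u' x| ≤ γ * S := by
    intro x hx
    rw [hu' x hx]
    calc |u' c + ∫ t in c..x, q t * u t| ≤ |u' c| + |∫ t in c..x, q t * u t| := abs_add_le _ _
      _ ≤ β * S + M * S := add_le_add hu'c (hinner x hx)
      _ = γ * S := by rw [hγdef]; ring
  -- Lipschitz bound on u
  have hLip : ∀ x ∈ I, ∀ y ∈ I, |u y - u x| ≤ γ * S * |y - x| := by
    intro x hx y hy
    have := (convex_Icc c (c + ℓ)).norm_image_sub_le_of_norm_hasDerivWithin_le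
      (f := u) (f' := u') (fun z hz => (hu z hz).hasDerivWithinAt)
      (fun z hz => by rw [Real.norm_eq_abs]; exact hu'B z hz) hx hy
    simpa [Real.norm_eq_abs] using this
  -- pointwise lower bound near x₀
  have hnear : ∀ t ∈ I, |t - x₀| ≤ r → (S / 2) ^ 2 ≤ (u t) ^ 2 := by
    intro t ht htr
    have h1 : |u x₀ - u t| ≤ γ * S * r := by
      have := hLip t ht x₀ hx₀
      calc |u x₀ - u t| ≤ γ * S * |x₀ - t| := this
        _ ≤ γ * S * r := by
            rw [abs_sub_comm]
            exact mul_le_mul_of_nonneg_left htr (by positivity)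
    have h2 : S / 2 ≤ |u t| := by
      have h3 : γ * S * r ≤ S / 2 := by nlinarith
      have h4 : S - |u t| ≤ |u x₀ - u t| := by
        have := abs_sub_abs_le_abs_sub (u x₀) (u t)
        linarith [this]
      have h5 : S - |u t| ≤ S / 2 := le_trans h4 (le_trans h1 h3)
      linarith
    calc (S / 2) ^ 2 ≤ |u t| ^ 2 := by
          exact pow_le_pow_left₀ (by positivity) h2 2
      _ = (u t) ^ 2 := sq_abs _
  -- u² interval integrable
  have hu2I : IntervalIntegrable (fun t => (u t) ^ 2) volume c (c + ℓ) := by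
    apply ContinuousOn.intervalIntegrable; rw [huIcc]; exact hu_cont.pow 2
  -- integral lower bound over a subinterval of length r around x₀
  have hkey : r * ((S / 2) ^ 2) ≤ ∫ t in c..(c + ℓ), (u t) ^ 2 := by
    have hmono : ∀ a b : ℝ, c ≤ a → a ≤ b → b ≤ c + ℓ →
        (∫ t in a..b, (u t) ^ 2) ≤ ∫ t in c..(c + ℓ), (u t) ^ 2 := by
      intro a b hca hab hbc
      exact intervalIntegral.integral_mono_interval hca hab hbc
        (Filter.Eventually.of_forall fun t => sq_nonneg _) hu2I
    have hlow : ∀ a b : ℝ, c ≤ a → b = a + r → b ≤ c + ℓ →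
        (∀ t ∈ Set.Icc a b, (S / 2) ^ 2 ≤ (u t) ^ 2) →
        r * ((S / 2) ^ 2) ≤ ∫ t in a..b, (u t) ^ 2 := by
      intro a b hca hb hbc hpt
      have hab : a ≤ b := by rw [hb]; linarith
      have hsub : IntervalIntegrable (fun t => (u t) ^ 2) volume a b :=
        hu2I.mono_set (by rw [huIcc, Set.uIcc_of_le hab]; exact Set.Icc_subset_Icc hca hbc)
      calc r * ((S / 2) ^ 2) = ∫ _ in a..b, ((S / 2) ^ 2 : ℝ) := by
            rw [intervalIntegral.integral_const, hb, smul_eq_mul]; ring_nf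
        _ ≤ ∫ t in a..b, (u t) ^ 2 :=
            intervalIntegral.integral_mono_on hab intervalIntegrable_const hsub hpt
    rcases le_or_gt x₀ (c + ℓ / 2) with hcase | hcase
    · -- use [x₀, x₀ + r]
      have hb : x₀ + r ≤ c + ℓ := by linarith
      refine le_trans (hlow x₀ (x₀ + r) hx₀.1 rfl hb ?_) (hmono x₀ (x₀ + r) hx₀.1 (by linarith) hb)
      intro t ht
      exact hnear t ⟨le_trans hx₀.1 ht.1, le_trans ht.2 hb⟩
        (by rw [abs_of_nonneg (by linarith [ht.1])]; linarith [ht.2])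
    · -- use [x₀ - r, x₀]
      have ha : c ≤ x₀ - r := by
        have := hx₀.2
        have hxge : c + ℓ / 2 ≤ x₀ := hcase.le
        linarith
      refine le_trans (hlow (x₀ - r) x₀ ha (by ring) hx₀.2 ?_)
        (hmono (x₀ - r) x₀ ha (by linarith) hx₀.2)
      intro t ht
      exact hnear t ⟨le_trans ha ht.1, le_trans ht.2 hx₀.2⟩
        (by rw [abs_of_nonpos (by linarith [ht.2]), neg_sub]; linarith [ht.1])
  -- conclude
  have hucS : (u c) ^ 2 ≤ S ^ 2 := by
    have := hS c (Set.left_mem_Icc.2 hcl)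
    nlinarith [abs_nonneg (u c), sq_abs (u c)]
  have hu'cS : (u' c) ^ 2 ≤ β ^ 2 * S ^ 2 := by
    nlinarith [abs_nonneg (u' c), sq_abs (u' c), hu'c]
  calc r / (4 * (1 + β ^ 2)) * ((u c) ^ 2 + (u' c) ^ 2)
      ≤ r / (4 * (1 + β ^ 2)) * ((1 + β ^ 2) * S ^ 2) := by
        refine mul_le_mul_of_nonneg_left ?_ (by positivity)
        nlinarith
    _ = r * ((S / 2) ^ 2) := by field_simp; ring
    _ ≤ ∫ t in c..(c + ℓ), (u t) ^ 2 := hkey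
end

section
/- Let u be a real-valued solution of -u'' + q u = 0 on [c, c+ℓ] with |u(c)|² + |u'(c)|² = 1, and suppose there are constants 0 < C₁ ≤ C₂ with C₁ ≤ |u(x)|² + |u'(x)|² ≤ C₂ for all x ∈ [c, c+ℓ]. Then for every 0 < α < ℓ/(2+ℓ) there exists x₀ ∈ [c, c+ℓ] with |u(x₀)| ≥ α √(C₁/2). -/
open MeasureTheory intervalIntegral

/-- If a normalized real solution of `-u'' + q u = 0` satisfies the two-sided bound
`C₁ ≤ u² + u'² ≤ C₂` on `[c, c+ℓ]`, then for every `0 < α < ℓ/(2+ℓ)` there is a point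
`x₀` where `|u(x₀)| ≥ α √(C₁/2)`. -/
theorem stmt3 (c ℓ C₁ C₂ : ℝ) (hℓ : 0 < ℓ) (hC₁ : 0 < C₁) (hC12 : C₁ ≤ C₂)
    (q u u' : ℝ → ℝ)
    (hu : ∀ x ∈ Set.Icc c (c + ℓ), HasDerivAt u (u' x) x)
    (hode : ∀ x ∈ Set.Icc c (c + ℓ), u' x = u' c + ∫ t in c..x, q t * u t)
    (hnorm : (u c) ^ 2 + (u' c) ^ 2 = 1)
    (hbd : ∀ x ∈ Set.Icc c (c + ℓ),
      C₁ ≤ (u x) ^ 2 + (u' x) ^ 2 ∧ (u x) ^ 2 + (u' x) ^ 2 ≤ C₂)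
    (α : ℝ) (hα0 : 0 < α) (hα1 : α < ℓ / (2 + ℓ)) :
    ∃ x₀ ∈ Set.Icc c (c + ℓ), α * Real.sqrt (C₁ / 2) ≤ |u x₀| := by
  by_contra h
  push_neg at h
  set C₃ := Real.sqrt (C₁ / 2) with hC₃def
  have hC₃ : 0 < C₃ := Real.sqrt_pos.mpr (by linarith)
  have hcl : c < c + ℓ := by linarith
  have hα1' : α < 1 := lt_of_lt_of_le hα1 (by
    rw [div_le_one (by linarith)]; linarith)
  have key : ∀ x ∈ Set.Icc c (c + ℓ), (1 - α) * C₃ ≤ |u' x| := by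
    intro x hx
    have h1 : C₁ ≤ (u x) ^ 2 + (u' x) ^ 2 := (hbd x hx).1
    have hsq : C₃ ^ 2 = C₁ / 2 := Real.sq_sqrt (by linarith)
    have h2 : C₃ ≤ |u x| + |u' x| := by
      nlinarith [abs_nonneg (u x), abs_nonneg (u' x), sq_abs (u x), sq_abs (u' x)]
    have h3 : |u x| < α * C₃ := h x hx
    linarith
  have hcont : ContinuousOn u (Set.Icc c (c + ℓ)) := fun x hx =>
    ((hu x hx).continuousAt).continuousWithinAt
  obtain ⟨ξ, hξ, hslope⟩ := exists_hasDerivAt_eq_slope u u' hcl hcont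
    (fun x hx => hu x (Set.Ioo_subset_Icc_self hx))
  have hξ' : ξ ∈ Set.Icc c (c + ℓ) := Set.Ioo_subset_Icc_self hξ
  have h4 := key ξ hξ'
  rw [hslope] at h4
  have h6 : |u (c + ℓ)| < α * C₃ := h _ (by constructor <;> linarith)
  have h7 : |u c| < α * C₃ := h _ (by constructor <;> linarith)
  have h5 : |u (c + ℓ) - u c| ≤ |u (c + ℓ)| + |u c| := abs_sub _ _
  have h8 : |(u (c + ℓ) - u c) / (c + ℓ - c)| = |u (c + ℓ) - u c| / ℓ := by
    rw [abs_div, abs_of_pos (by linarith : (0:ℝ) < c + ℓ - c)]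
    ring_nf
  rw [h8] at h4
  have h9 : (1 - α) * C₃ * ℓ ≤ |u (c + ℓ) - u c| := by
    rw [le_div_iff₀ hℓ] at h4; linarith
  have h10 : (1 - α) * ℓ < 2 * α := by nlinarith
  have : ℓ / (2 + ℓ) < α := by rw [div_lt_iff₀ (by linarith)]; nlinarith
  linarith
end

section
/- Let s ∈ (0,1), M > 0, and let ρ be a bounded density supported in [η_min, η_max]. Suppose u : ℤ → ℝ with (u(x), u(x+1)) ≠ (0,0), and suppose u(x), u(x+1), u(y), u(y+1) do not depend on the parameter η. Then there is C = C(s, M, ρ) such that for all E with |E - η| ≤ M on the support of ρ: ∫_{η_min}^{η_max} |u(y)|^s / |u(x+1) + (E - η) u(x)|^s · ρ(η) dη ≤ C · ‖(u(y), u(y+1))‖^s / ‖(u(x), u(x+1))‖^s. -/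
open MeasureTheory intervalIntegral

private lemma intInt_abs_rpow {s : ℝ} (hs0 : 0 < s) (hs1 : s < 1) (a b : ℝ) :
    IntervalIntegrable (fun t => |t| ^ (-s)) volume a b := by
  have key : ∀ c : ℝ, 0 ≤ c → IntervalIntegrable (fun t => |t| ^ (-s)) volume 0 c := by
    intro c hc
    have base := intervalIntegrable_rpow' (show (-1 : ℝ) < -s by linarith) (a := 0) (b := c)
    rw [intervalIntegrable_iff, Set.uIoc_of_le hc] at base ⊢
    exact base.congr_fun (fun t ht => by rw [abs_of_nonneg (le_of_lt ht.1)]) measurableSet_Ioc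
  have every : ∀ c : ℝ, IntervalIntegrable (fun t => |t| ^ (-s)) volume 0 c := by
    intro c
    rcases le_total 0 c with hc | hc
    · exact key c hc
    · rw [IntervalIntegrable.iff_comp_neg, neg_zero]
      simpa only [abs_neg] using key (-c) (by linarith)
  exact (every a).symm.trans (every b)

private lemma integral_abs_rpow {s : ℝ} (hs0 : 0 < s) (hs1 : s < 1) {c : ℝ} (hc : 0 ≤ c) :
    ∫ t in (0 : ℝ)..c, |t| ^ (-s) = c ^ (1 - s) / (1 - s) := by
  have h1 : (∫ t in (0 : ℝ)..c, |t| ^ (-s)) = ∫ t in (0 : ℝ)..c, t ^ (-s) := by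
    apply intervalIntegral.integral_congr
    intro t ht
    rw [Set.uIcc_of_le hc] at ht
    show |t| ^ (-s) = t ^ (-s)
    rw [abs_of_nonneg ht.1]
  rw [h1, integral_rpow (Or.inl (by linarith))]
  rw [Real.zero_rpow (show -s + 1 ≠ 0 by intro h; linarith)]
  rw [show -s + 1 = 1 - s by ring]
  ring

private lemma frac_integral_bound {s : ℝ} (hs0 : 0 < s) (hs1 : s < 1) {a b β L : ℝ}
    (hab : a ≤ b) (hL0 : 0 ≤ L) (h1 : |a - β| ≤ L) (h2 : |b - β| ≤ L) :
    (∫ η in a..b, |η - β| ^ (-s)) ≤ 2 * (L ^ (1 - s) / (1 - s)) := by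
  have hcomp : (∫ η in a..b, |η - β| ^ (-s)) = ∫ t in (a - β)..(b - β), |t| ^ (-s) :=
    intervalIntegral.integral_comp_sub_right (fun t => |t| ^ (-s)) β
  rw [hcomp]
  have hInt : IntervalIntegrable (fun t => |t| ^ (-s)) volume (-L) L :=
    intInt_abs_rpow hs0 hs1 _ _
  have hmono := intervalIntegral.integral_mono_interval (μ := volume)
    (f := fun t => |t| ^ (-s)) (abs_le.1 h1).1 (by linarith) (abs_le.1 h2).2
    (Filter.Eventually.of_forall (fun t => by positivity)) hInt
  refine hmono.trans ?_
  have hsplit : (∫ t in (-L)..(0 : ℝ), |t| ^ (-s)) + (∫ t in (0 : ℝ)..L, |t| ^ (-s))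
      = ∫ t in (-L)..L, |t| ^ (-s) :=
    intervalIntegral.integral_add_adjacent_intervals
      (intInt_abs_rpow hs0 hs1 _ _) (intInt_abs_rpow hs0 hs1 _ _)
  have hneg : (∫ t in (-L)..(0 : ℝ), |t| ^ (-s)) = ∫ t in (0 : ℝ)..L, |t| ^ (-s) := by
    have := intervalIntegral.integral_comp_neg (a := (0 : ℝ)) (b := L)
      (fun t => |t| ^ (-s))
    simp only [abs_neg, neg_zero] at this
    exact this.symm
  rw [← hsplit, hneg, integral_abs_rpow hs0 hs1 hL0]
  ring_nf
  exact le_refl _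

private lemma final_scalar {s P b1 sy D R sx : ℝ} (hs0 : 0 < s) (hP : 0 ≤ P)
    (hb : |b1| ≤ sy) (hsx : 0 < sx) (hD : 0 < D) (h : sx ≤ R * D) :
    P * |b1| ^ s / D ^ s ≤ P * R ^ s * sy ^ s / sx ^ s := by
  have hR : 0 ≤ R := by nlinarith
  have hsy : 0 ≤ sy := (abs_nonneg _).trans hb
  have hDs : 0 < D ^ s := Real.rpow_pos_of_pos hD s
  have hsxs : 0 < sx ^ s := Real.rpow_pos_of_pos hsx s
  rw [div_le_div_iff₀ hDs hsxs]
  have key : |b1| * sx ≤ sy * (R * D) :=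
    mul_le_mul hb h hsx.le hsy
  calc P * |b1| ^ s * sx ^ s = P * ((|b1| * sx) ^ s) := by
        rw [Real.mul_rpow (abs_nonneg _) hsx.le]; ring
    _ ≤ P * ((sy * (R * D)) ^ s) := by
        apply mul_le_mul_of_nonneg_left _ hP
        exact Real.rpow_le_rpow (by positivity) key hs0.le
    _ = P * R ^ s * sy ^ s * D ^ s := by
        rw [Real.mul_rpow hsy (by positivity), Real.mul_rpow hR hD.le]; ring

set_option maxHeartbeats 2000000 in
/-- Key fractional-moment estimate for the 1D discrete Anderson model:
`∫ |u(y)|^s / |u(x+1) + (E-η) u(x)|^s ρ(η) dη ≤ C ‖(u(y),u(y+1))‖^s / ‖(u(x),u(x+1))‖^s`. -/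
theorem stmt12 (s M ηmin ηmax : ℝ) (hs : s ∈ Set.Ioo (0 : ℝ) 1) (hM : 0 < M)
    (hη : ηmin ≤ ηmax) (ρ : ℝ → ℝ) (hmeas : Measurable ρ) (hnn : ∀ t, 0 ≤ ρ t)
    (K : ℝ) (hK : ∀ t, ρ t ≤ K)
    (hsupp : ∀ t, t ∉ Set.Icc ηmin ηmax → ρ t = 0)
    (hprob : ∫ t, ρ t = 1) :
    ∃ C : ℝ, ∀ (u : ℤ → ℝ) (x y : ℤ) (E : ℝ),
      ¬(u x = 0 ∧ u (x + 1) = 0) →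
      (∀ η ∈ Set.Icc ηmin ηmax, |E - η| ≤ M) →
      (∫ η in ηmin..ηmax, |u y| ^ s / |u (x + 1) + (E - η) * u x| ^ s * ρ η) ≤
        C * Real.sqrt ((u y) ^ 2 + (u (y + 1)) ^ 2) ^ s /
          Real.sqrt ((u x) ^ 2 + (u (x + 1)) ^ 2) ^ s := by
  obtain ⟨hs0, hs1⟩ := hs
  have h1s : 0 < 1 - s := by linarith
  have hK0 : 0 ≤ K := (hnn 0).trans (hK 0)
  set L : ℝ := ηmax - ηmin + 3 * M with hLdef
  have hL0 : 0 ≤ L := by simp only [hLdef]; linarith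
  set T1 : ℝ := K * (2 * (L ^ (1 - s) / (1 - s))) * (Real.sqrt (1 + 4 * M ^ 2)) ^ s with hT1
  set T2 : ℝ := K * (ηmax - ηmin) * (2 * Real.sqrt (1 + 1 / (4 * M ^ 2))) ^ s with hT2
  have hT1nn : 0 ≤ T1 := by
    have : (0:ℝ) ≤ L ^ (1 - s) := Real.rpow_nonneg hL0 _
    have : (0:ℝ) ≤ (Real.sqrt (1 + 4 * M ^ 2)) ^ s := Real.rpow_nonneg (Real.sqrt_nonneg _) _
    positivity
  have hT2nn : 0 ≤ T2 := by
    have h2 : (0:ℝ) ≤ ηmax - ηmin := by linarith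
    have : (0:ℝ) ≤ (2 * Real.sqrt (1 + 1 / (4 * M ^ 2))) ^ s :=
      Real.rpow_nonneg (by positivity) _
    positivity
  refine ⟨T1 + T2, ?_⟩
  intro u x y E hu hE
  set a1 : ℝ := u x with ha1def
  set a2 : ℝ := u (x + 1) with ha2def
  set b1 : ℝ := u y with hb1def
  set b2 : ℝ := u (y + 1) with hb2def
  set sx : ℝ := Real.sqrt (a1 ^ 2 + a2 ^ 2) with hsxdef
  set sy : ℝ := Real.sqrt (b1 ^ 2 + b2 ^ 2) with hsydef
  have hsxpos : 0 < sx := by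
    rw [hsxdef]
    apply Real.sqrt_pos.2
    rcases (not_and_or.1 hu) with h | h
    · have : a1 ≠ 0 := h
      positivity
    · have : a2 ≠ 0 := h
      positivity
  have hsybd : |b1| ≤ sy := by
    rw [hsydef, show |b1| = Real.sqrt (b1 ^ 2) from (Real.sqrt_sq_eq_abs b1).symm]
    exact Real.sqrt_le_sqrt (by nlinarith [sq_nonneg b2])
  have hsxspos : 0 < sx ^ s := Real.rpow_pos_of_pos hsxpos s
  have hsysnn : 0 ≤ sy ^ s := Real.rpow_nonneg (Real.sqrt_nonneg _) _
  have hfm : Measurable (fun η => |b1| ^ s / |a2 + (E - η) * a1| ^ s * ρ η) := by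
    have hc : Continuous fun η : ℝ => |a2 + (E - η) * a1| ^ s :=
      ((continuous_const.add ((continuous_const.sub continuous_id).mul
        continuous_const)).abs).rpow_const (fun _ => Or.inr hs0.le)
    exact (measurable_const.div hc.measurable).mul hmeas
  have hfnn : ∀ η, 0 ≤ |b1| ^ s / |a2 + (E - η) * a1| ^ s * ρ η := fun η => by
    have := hnn η
    have h1 : (0:ℝ) ≤ |b1| ^ s := Real.rpow_nonneg (abs_nonneg _) _
    have h2 : (0:ℝ) ≤ |a2 + (E - η) * a1| ^ s := Real.rpow_nonneg (abs_nonneg _) _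
    positivity
  by_cases hcase : |a2| ≤ 2 * M * |a1|
  -- Case C : |u(x+1)| ≤ 2M |u(x)|, so u x ≠ 0
  · have ha1 : a1 ≠ 0 := by
      intro h0
      rw [h0, abs_zero, mul_zero] at hcase
      exact hu ⟨h0, abs_nonpos_iff.1 hcase⟩
    have ha1p : 0 < |a1| := abs_pos.2 ha1
    set β : ℝ := a2 / a1 + E with hβdef
    have hr : |a2 / a1| ≤ 2 * M := by
      rw [abs_div, div_le_iff₀ ha1p]
      linarith
    have hβ1 : |ηmin - β| ≤ L := by
      have hEb := hE ηmin ⟨le_refl _, hη⟩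
      have heq : ηmin - β = (ηmin - E) + (-(a2 / a1)) := by rw [hβdef]; ring
      rw [heq]
      refine (abs_add_le _ _).trans ?_
      rw [abs_neg, abs_sub_comm]
      simp only [hLdef]; linarith
    have hβ2 : |ηmax - β| ≤ L := by
      have hEb := hE ηmax ⟨hη, le_refl _⟩
      have heq : ηmax - β = (ηmax - E) + (-(a2 / a1)) := by rw [hβdef]; ring
      rw [heq]
      refine (abs_add_le _ _).trans ?_
      rw [abs_neg, abs_sub_comm]
      simp only [hLdef]; linarith
    have hden : ∀ η : ℝ, |a2 + (E - η) * a1| = |a1| * |η - β| := by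
      intro η
      have : a2 + (E - η) * a1 = a1 * (β - η) := by
        rw [hβdef]; field_simp; ring
      rw [this, abs_mul, abs_sub_comm]
    have hb1s : (0:ℝ) ≤ |b1| ^ s := Real.rpow_nonneg (abs_nonneg _) _
    have ha1s : (0:ℝ) < |a1| ^ s := Real.rpow_pos_of_pos ha1p _
    have hQnn : 0 ≤ |b1| ^ s / |a1| ^ s := by positivity
    have hfg : ∀ η, |b1| ^ s / |a2 + (E - η) * a1| ^ s * ρ η
        ≤ |b1| ^ s / |a1| ^ s * K * |η - β| ^ (-s) := by
      intro η
      rcases eq_or_ne η β with he | he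
      · subst he
        rw [hden β, sub_self, abs_zero, mul_zero, Real.zero_rpow hs0.ne',
          div_zero, zero_mul]
        have h3 : (0:ℝ) ≤ (0:ℝ) ^ (-s) := Real.rpow_nonneg le_rfl _
        exact mul_nonneg (mul_nonneg hQnn hK0) h3
      · have habsp : 0 < |η - β| := abs_pos.2 (sub_ne_zero.2 he)
        have hrw : |b1| ^ s / |a2 + (E - η) * a1| ^ s * ρ η
            = |b1| ^ s / |a1| ^ s * (ρ η / |η - β| ^ s) := by
          rw [hden η, Real.mul_rpow (abs_nonneg _) (abs_nonneg _)]
          ring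
        rw [hrw, mul_assoc]
        apply mul_le_mul_of_nonneg_left _ hQnn
        rw [Real.rpow_neg (abs_nonneg _), ← div_eq_mul_inv]
        gcongr
        exact hK η
    have hhint : IntervalIntegrable (fun η => |η - β| ^ (-s)) volume ηmin ηmax := by
      have := (intInt_abs_rpow hs0 hs1 (ηmin - β) (ηmax - β)).comp_sub_right β
      simpa using this
    have hgint : IntervalIntegrable
        (fun η => |b1| ^ s / |a1| ^ s * K * |η - β| ^ (-s)) volume ηmin ηmax :=
      hhint.const_mul _
    have hfint : IntervalIntegrable
        (fun η => |b1| ^ s / |a2 + (E - η) * a1| ^ s * ρ η) volume ηmin ηmax := by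
      apply hgint.mono_fun hfm.aestronglyMeasurable.restrict
      refine Filter.Eventually.of_forall fun η => ?_
      show ‖_‖ ≤ ‖_‖
      rw [Real.norm_eq_abs, Real.norm_eq_abs, abs_of_nonneg (hfnn η)]
      exact (hfg η).trans (le_abs_self _)
    have step1 : (∫ η in ηmin..ηmax, |b1| ^ s / |a2 + (E - η) * a1| ^ s * ρ η)
        ≤ ∫ η in ηmin..ηmax, |b1| ^ s / |a1| ^ s * K * |η - β| ^ (-s) :=
      intervalIntegral.integral_mono_on hη hfint hgint fun η _ => hfg η
    have step2 : (∫ η in ηmin..ηmax, |b1| ^ s / |a1| ^ s * K * |η - β| ^ (-s))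
        ≤ |b1| ^ s / |a1| ^ s * K * (2 * (L ^ (1 - s) / (1 - s))) := by
      rw [intervalIntegral.integral_const_mul]
      exact mul_le_mul_of_nonneg_left
        (frac_integral_bound hs0 hs1 hη hL0 hβ1 hβ2) (by positivity)
    have hsxle : sx ≤ Real.sqrt (1 + 4 * M ^ 2) * |a1| := by
      have hsq : a1 ^ 2 + a2 ^ 2 ≤ (1 + 4 * M ^ 2) * a1 ^ 2 := by
        have := mul_self_le_mul_self (abs_nonneg a2) hcase
        nlinarith [sq_abs a1, sq_abs a2]
      calc sx ≤ Real.sqrt ((1 + 4 * M ^ 2) * a1 ^ 2) := Real.sqrt_le_sqrt hsq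
        _ = Real.sqrt (1 + 4 * M ^ 2) * |a1| := by
            rw [Real.sqrt_mul (by positivity), Real.sqrt_sq_eq_abs]
    have step3 : |b1| ^ s / |a1| ^ s * K * (2 * (L ^ (1 - s) / (1 - s)))
        ≤ T1 * sy ^ s / sx ^ s := by
      have heq : |b1| ^ s / |a1| ^ s * K * (2 * (L ^ (1 - s) / (1 - s)))
          = (K * (2 * (L ^ (1 - s) / (1 - s)))) * |b1| ^ s / |a1| ^ s := by
        ring
      rw [heq, hT1]
      have hLnn : (0:ℝ) ≤ L ^ (1 - s) := Real.rpow_nonneg hL0 _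
      exact final_scalar hs0 (by positivity) hsybd hsxpos ha1p hsxle
    calc (∫ η in ηmin..ηmax, |b1| ^ s / |a2 + (E - η) * a1| ^ s * ρ η)
        ≤ T1 * sy ^ s / sx ^ s := step1.trans (step2.trans step3)
      _ ≤ (T1 + T2) * sy ^ s / sx ^ s := by
          gcongr
          linarith
  -- Case B : |u(x+1)| > 2M |u(x)|
  · push_neg at hcase
    have ha2p : 0 < |a2| := lt_of_le_of_lt (by positivity) hcase
    have hDp : 0 < |a2| / 2 := by positivity
    have hb1s : (0:ℝ) ≤ |b1| ^ s := Real.rpow_nonneg (abs_nonneg _) _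
    have hds : 0 < (|a2| / 2) ^ s := Real.rpow_pos_of_pos hDp s
    have hfg : ∀ η ∈ Set.Icc ηmin ηmax, |b1| ^ s / |a2 + (E - η) * a1| ^ s * ρ η
        ≤ |b1| ^ s / (|a2| / 2) ^ s * K := by
      intro η hηmem
      have hEb := hE η hηmem
      have hlow : |a2| / 2 ≤ |a2 + (E - η) * a1| := by
        have h1 : |a2| ≤ |a2 + (E - η) * a1| + |(E - η) * a1| := by
          calc |a2| = |(a2 + (E - η) * a1) + (-((E - η) * a1))| := by ring_nf
            _ ≤ |a2 + (E - η) * a1| + |-((E - η) * a1)| := abs_add_le _ _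
            _ = |a2 + (E - η) * a1| + |(E - η) * a1| := by rw [abs_neg]
        have h2 : |(E - η) * a1| ≤ M * |a1| := by
          rw [abs_mul]
          exact mul_le_mul_of_nonneg_right hEb (abs_nonneg _)
        linarith
      apply mul_le_mul _ (hK η) (hnn η) (by positivity)
      gcongr
    have hgint : IntervalIntegrable (fun _ : ℝ => |b1| ^ s / (|a2| / 2) ^ s * K)
        volume ηmin ηmax := intervalIntegrable_const
    have hfint : IntervalIntegrable
        (fun η => |b1| ^ s / |a2 + (E - η) * a1| ^ s * ρ η) volume ηmin ηmax := by
      apply hgint.mono_fun hfm.aestronglyMeasurable.restrict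
      refine (ae_restrict_mem measurableSet_uIoc).mono fun η hηmem => ?_
      have hmem : η ∈ Set.Icc ηmin ηmax := by
        rw [Set.uIoc_of_le hη] at hηmem
        exact ⟨hηmem.1.le, hηmem.2⟩
      show ‖_‖ ≤ ‖_‖
      rw [Real.norm_eq_abs, Real.norm_eq_abs, abs_of_nonneg (hfnn η)]
      exact (hfg η hmem).trans (le_abs_self _)
    have step1 : (∫ η in ηmin..ηmax, |b1| ^ s / |a2 + (E - η) * a1| ^ s * ρ η)
        ≤ ∫ η in ηmin..ηmax, |b1| ^ s / (|a2| / 2) ^ s * K :=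
      intervalIntegral.integral_mono_on hη hfint hgint hfg
    have step2 : (∫ η in ηmin..ηmax, (fun _ : ℝ => |b1| ^ s / (|a2| / 2) ^ s * K) η)
        = (K * (ηmax - ηmin)) * |b1| ^ s / (|a2| / 2) ^ s := by
      rw [intervalIntegral.integral_const, smul_eq_mul]
      ring
    have hsxle : sx ≤ (2 * Real.sqrt (1 + 1 / (4 * M ^ 2))) * (|a2| / 2) := by
      have hsq : a1 ^ 2 + a2 ^ 2 ≤ (1 + 1 / (4 * M ^ 2)) * a2 ^ 2 := by
        have hkey := mul_self_le_mul_self (by positivity : (0:ℝ) ≤ 2 * M * |a1|) hcase.le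
        have hM2 : (0:ℝ) < M ^ 2 := by positivity
        have h4 : a1 ^ 2 ≤ a2 ^ 2 / (4 * M ^ 2) := by
          rw [le_div_iff₀ (by positivity)]
          nlinarith [sq_abs a1, sq_abs a2]
        have h5 : a2 ^ 2 / (4 * M ^ 2) = 1 / (4 * M ^ 2) * a2 ^ 2 := by ring
        nlinarith
      calc sx ≤ Real.sqrt ((1 + 1 / (4 * M ^ 2)) * a2 ^ 2) := Real.sqrt_le_sqrt hsq
        _ = Real.sqrt (1 + 1 / (4 * M ^ 2)) * |a2| := by
            rw [Real.sqrt_mul (by positivity), Real.sqrt_sq_eq_abs]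
        _ = (2 * Real.sqrt (1 + 1 / (4 * M ^ 2))) * (|a2| / 2) := by ring
    have step3 : (K * (ηmax - ηmin)) * |b1| ^ s / (|a2| / 2) ^ s
        ≤ T2 * sy ^ s / sx ^ s := by
      rw [hT2]
      have hP : (0:ℝ) ≤ K * (ηmax - ηmin) := by
        have : (0:ℝ) ≤ ηmax - ηmin := by linarith
        positivity
      exact final_scalar hs0 hP hsybd hsxpos hDp hsxle
    calc (∫ η in ηmin..ηmax, |b1| ^ s / |a2 + (E - η) * a1| ^ s * ρ η)
        ≤ T2 * sy ^ s / sx ^ s := step1.trans (step2.le.trans step3)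
      _ ≤ (T1 + T2) * sy ^ s / sx ^ s := by
          gcongr
          linarith
end
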